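/- Let β ∈ (π/2, π), and let A > 0, σ > 0 satisfy A² + σ² < 1, A·cos β + σ·sin β < 0, and (2A² + 2σ² − 1)·A·cos β + σ·sin β < 0. Set r̄ = √(A² + σ²), θ̄₁ = arcsin(A/r̄) − β, λ = (A cos β + σ sin β)/(1 − A² − σ²), and a_ℓ = √( ((2A² + 2σ² − 1) A cos β + σ sin β) / (A cos β + σ sin β) ). Then sin θ̄₁ = (A cos β − σ sin β)/r̄ < 0, and the identity r̄ = (sin θ̄₁ − √(sin² θ̄₁ + 4λ² a_ℓ²))/(2λ) holds. -/

import Mathlib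

set_option maxHeartbeats 1000000 in
/-- The boundary condition `r₁(θ̄₁) = r̄` for the inner exterior nodoid with waist
parameter `a_ℓ`. -/
theorem inner_nodoid_matching (β A σ : ℝ)
    (hβ : β ∈ Set.Ioo (Real.pi / 2) Real.pi) (hA : 0 < A) (hσ : 0 < σ)
    (h1 : A ^ 2 + σ ^ 2 < 1) (h2 : A * Real.cos β + σ * Real.sin β < 0)
    (h3 : (2 * A ^ 2 + 2 * σ ^ 2 - 1) * A * Real.cos β + σ * Real.sin β < 0)
    (rbar θ1 lam aℓ : ℝ)
    (hrbar : rbar = Real.sqrt (A ^ 2 + σ ^ 2))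
    (hθ1 : θ1 = Real.arcsin (A / rbar) - β)
    (hlam : lam = (A * Real.cos β + σ * Real.sin β) / (1 - A ^ 2 - σ ^ 2))
    (haℓ : aℓ = Real.sqrt (((2 * A ^ 2 + 2 * σ ^ 2 - 1) * A * Real.cos β + σ * Real.sin β)
        / (A * Real.cos β + σ * Real.sin β))) :
    Real.sin θ1 = (A * Real.cos β - σ * Real.sin β) / rbar ∧
    Real.sin θ1 < 0 ∧
    rbar = (Real.sin θ1 - Real.sqrt ((Real.sin θ1) ^ 2 + 4 * lam ^ 2 * aℓ ^ 2))
      / (2 * lam) := by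
  obtain ⟨hβ1, hβ2⟩ := hβ
  have hc : Real.cos β < 0 := Real.cos_neg_of_pi_div_two_lt_of_lt hβ1 (by linarith [Real.pi_pos])
  have hs : 0 < Real.sin β := Real.sin_pos_of_pos_of_lt_pi (by linarith [Real.pi_pos]) hβ2
  have hRpos : 0 < A ^ 2 + σ ^ 2 := by positivity
  have hrpos : 0 < rbar := hrbar ▸ Real.sqrt_pos.mpr hRpos
  have hr2 : rbar ^ 2 = A ^ 2 + σ ^ 2 := by rw [hrbar]; exact Real.sq_sqrt hRpos.le
  have hAle : A ≤ rbar := by nlinarith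
  have hx1 : A / rbar ≤ 1 := by rw [div_le_one hrpos]; exact hAle
  have hx0 : -1 ≤ A / rbar := le_trans (by norm_num) (by positivity : (0:ℝ) ≤ A / rbar)
  have hcos : Real.cos (Real.arcsin (A / rbar)) = σ / rbar := by
    rw [Real.cos_arcsin]
    have : 1 - (A / rbar) ^ 2 = (σ / rbar) ^ 2 := by
      field_simp
      nlinarith
    rw [this, Real.sqrt_sq (by positivity)]
  have hsin : Real.sin θ1 = (A * Real.cos β - σ * Real.sin β) / rbar := by
    rw [hθ1, Real.sin_sub, Real.sin_arcsin hx0 hx1, hcos]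
    field_simp
  have hsinneg : Real.sin θ1 < 0 := by
    rw [hsin]
    apply div_neg_of_neg_of_pos _ hrpos
    nlinarith
  have hden : (0:ℝ) < 1 - A ^ 2 - σ ^ 2 := by linarith
  have hlamneg : lam < 0 := by
    rw [hlam]; exact div_neg_of_neg_of_pos h2 hden
  have haℓ2 : aℓ ^ 2 = ((2 * A ^ 2 + 2 * σ ^ 2 - 1) * A * Real.cos β + σ * Real.sin β)
      / (A * Real.cos β + σ * Real.sin β) := by
    rw [haℓ]
    refine Real.sq_sqrt ?_
    rw [div_nonneg_iff]
    right
    exact ⟨h3.le, h2.le⟩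
  have hrs : rbar * Real.sin θ1 = A * Real.cos β - σ * Real.sin β := by
    rw [hsin]; field_simp
  have hl2 : lam * (1 - A ^ 2 - σ ^ 2) = A * Real.cos β + σ * Real.sin β := by
    rw [hlam]; field_simp
  have hkey : lam * aℓ ^ 2 = lam * rbar ^ 2 - rbar * Real.sin θ1 := by
    rw [hrs, hr2, haℓ2, hlam]
    field_simp [h2.ne, hden.ne']
    ring
  have hsq : (Real.sin θ1) ^ 2 + 4 * lam ^ 2 * aℓ ^ 2
      = (Real.sin θ1 - 2 * lam * rbar) ^ 2 := by
    linear_combination 4 * lam * hkey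
  have hEnn : 0 ≤ Real.sin θ1 - 2 * lam * rbar := by
    have h4 : 0 < rbar * (1 - (A ^ 2 + σ ^ 2)) * (Real.sin θ1 - 2 * lam * rbar) := by
      have e0 : rbar * (1 - (A ^ 2 + σ ^ 2)) * (Real.sin θ1 - 2 * lam * rbar)
          = (1 - A ^ 2 - σ ^ 2) * (rbar * Real.sin θ1)
            - 2 * (lam * (1 - A ^ 2 - σ ^ 2)) * rbar ^ 2 := by ring
      rw [e0, hrs, hl2, hr2]
      have hAc : 0 < -(A * Real.cos β) := by linarith [mul_neg_of_pos_of_neg hA hc]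
      have h4a : 0 < (A ^ 2 + σ ^ 2) * (1 - A ^ 2 - σ ^ 2) * (-(A * Real.cos β)) :=
        mul_pos (mul_pos hRpos hden) hAc
      have h4b := mul_neg_of_pos_of_neg
        (show (0:ℝ) < 1 + (A ^ 2 + σ ^ 2) by positivity) h3
      linarith [h4a, h4b]
    nlinarith [mul_pos hrpos hden, h4]
  have hsqrt : Real.sqrt ((Real.sin θ1) ^ 2 + 4 * lam ^ 2 * aℓ ^ 2)
      = Real.sin θ1 - 2 * lam * rbar := by
    rw [hsq]; exact Real.sqrt_sq hEnn
  refine ⟨hsin, hsinneg, ?_⟩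
  rw [hsqrt]
  field_simp [hlamneg.ne]
  ring
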